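/- Let α, γ ∈ ℂ with sin(α/2) ≠ 0, sinh(γ/2) ≠ 0, and cosh(γ/4) ≠ 0. Let S ∈ SL(2,ℂ) with tr(S) = 2 cos(α/2), let L be the diagonal matrix diag(e^{γ/2}, e^{−γ/2}), and suppose tr(S⁻¹L) = tr(S). Define the line matrices l(S) = (S − S⁻¹)/(2i sinh(iα/2)) and l(L) = (L − L⁻¹)/(2i sinh(γ/2)). Then −tr(l(S) l(L))/2 = −i cot(α/2) tanh(γ/4). -/

import Mathlib

open Matrix Complex

/-- Pythagorean theorem computation: for `S ∈ SL(2,ℂ)` with `tr S = 2cos(α/2)`,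
`L = diag(e^{γ/2}, e^{-γ/2})` with `tr(S⁻¹L) = tr S`, and line matrices
`l(S) = (S - S⁻¹)/(2i sinh(iα/2))`, `l(L) = (L - L⁻¹)/(2i sinh(γ/2))`, one has
`-tr(l(S)l(L))/2 = -i cot(α/2) tanh(γ/4)`. -/
theorem stmt_10 (α γ : ℂ) (hsin : Complex.sin (α / 2) ≠ 0)
    (hsinh : Complex.sinh (γ / 2) ≠ 0) (hcosh : Complex.cosh (γ / 4) ≠ 0)
    (S : Matrix.SpecialLinearGroup (Fin 2) ℂ)
    (htrS : Matrix.trace (S : Matrix (Fin 2) (Fin 2) ℂ) = 2 * Complex.cos (α / 2))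
    (L : Matrix (Fin 2) (Fin 2) ℂ)
    (hLdef : L = !![Complex.exp (γ / 2), 0; 0, Complex.exp (-(γ / 2))])
    (htrSL : Matrix.trace (((S⁻¹ : Matrix.SpecialLinearGroup (Fin 2) ℂ) :
        Matrix (Fin 2) (Fin 2) ℂ) * L) = Matrix.trace (S : Matrix (Fin 2) (Fin 2) ℂ))
    (lS lL : Matrix (Fin 2) (Fin 2) ℂ)
    (hlS : lS = (2 * Complex.I * Complex.sinh (Complex.I * α / 2))⁻¹ •
      ((S : Matrix (Fin 2) (Fin 2) ℂ) -
        ((S⁻¹ : Matrix.SpecialLinearGroup (Fin 2) ℂ) : Matrix (Fin 2) (Fin 2) ℂ)))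
    (hlL : lL = (2 * Complex.I * Complex.sinh (γ / 2))⁻¹ • (L - L⁻¹)) :
    -Matrix.trace (lS * lL) / 2 =
      -Complex.I * (Complex.cos (α / 2) / Complex.sin (α / 2)) * Complex.tanh (γ / 4) := by
  set a := (S : Matrix (Fin 2) (Fin 2) ℂ) 0 0 with ha
  set b := (S : Matrix (Fin 2) (Fin 2) ℂ) 0 1 with hb
  set c := (S : Matrix (Fin 2) (Fin 2) ℂ) 1 0 with hc
  set d := (S : Matrix (Fin 2) (Fin 2) ℂ) 1 1 with hd
  have hA : (S : Matrix (Fin 2) (Fin 2) ℂ) = !![a, b; c, d] := by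
    rw [ha, hb, hc, hd]; exact (Matrix.etaExpand_eq _).symm
  have hAinv : ((S⁻¹ : Matrix.SpecialLinearGroup (Fin 2) ℂ) : Matrix (Fin 2) (Fin 2) ℂ)
      = !![d, -b; -c, a] := by
    rw [Matrix.SpecialLinearGroup.coe_inv, hA, Matrix.adjugate_fin_two]
    simp
  have hE0 : Complex.exp (γ / 4) ≠ 0 := Complex.exp_ne_zero _
  set E := Complex.exp (γ / 4) with hE
  have he : Complex.exp (γ / 2) = E ^ 2 := by
    rw [hE, sq, ← Complex.exp_add]; congr 1; ring
  have hf : Complex.exp (-(γ / 2)) = (E ^ 2)⁻¹ := by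
    rw [Complex.exp_neg, he]
  have hLinv : L⁻¹ = !![Complex.exp (-(γ / 2)), 0; 0, Complex.exp (γ / 2)] := by
    apply Matrix.inv_eq_right_inv
    rw [hLdef, Matrix.mul_fin_two]
    simp [← Complex.exp_add, Matrix.one_fin_two]
  have hsh2 : Complex.sinh (γ / 2) = (E ^ 2 - (E ^ 2)⁻¹) / 2 := by
    rw [show Complex.sinh (γ/2) = (Complex.exp (γ/2) - Complex.exp (-(γ/2)))/2 from rfl, he, hf]
  have hsh4 : Complex.sinh (γ / 4) = (E - E⁻¹) / 2 := by
    rw [show Complex.sinh (γ/4) = (Complex.exp (γ/4) - Complex.exp (-(γ/4)))/2 from rfl, Complex.exp_neg, hE]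
  have hch4 : Complex.cosh (γ / 4) = (E + E⁻¹) / 2 := by
    rw [show Complex.cosh (γ/4) = (Complex.exp (γ/4) + Complex.exp (-(γ/4)))/2 from rfl, Complex.exp_neg, hE]
  have hchE : E + E⁻¹ ≠ 0 := by
    intro h; apply hcosh; rw [hch4, h]; norm_num
  have hE2 : E ^ 2 - 1 ≠ 0 := by
    intro h
    apply hsinh
    rw [hsh2]
    have h1 : E ^ 2 = 1 := by linear_combination h
    rw [h1]; norm_num
  have hsI : Complex.sinh (Complex.I * α / 2) = Complex.sin (α / 2) * Complex.I := by
    have : Complex.I * α / 2 = (α / 2) * Complex.I := by ring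
    rw [this, Complex.sinh_mul_I]
  have htrS' : a + d = 2 * Complex.cos (α / 2) := by
    rw [← htrS, hA, Matrix.trace_fin_two_of]
  have htrSL' : d * E ^ 2 + a * (E ^ 2)⁻¹ = a + d := by
    have h := htrSL
    rw [hAinv, hLdef, hA, Matrix.mul_fin_two, Matrix.trace_fin_two_of,
      Matrix.trace_fin_two_of, he, hf] at h
    linear_combination h
  have had : a = d * E ^ 2 := by
    have key : (E ^ 2 - 1) * (d * E ^ 2 - a) = 0 := by
      have h2 : d * E ^ 2 * E ^ 2 + a = (a + d) * E ^ 2 := by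
        field_simp at htrSL'
        linear_combination htrSL'
      linear_combination h2
    rcases mul_eq_zero.mp key with h | h
    · exact absurd h hE2
    · linear_combination -h
  have hE21 : E ^ 2 + 1 ≠ 0 := by
    intro h; apply hchE
    have : E * (E + E⁻¹) = E ^ 2 + 1 := by field_simp
    rcases mul_eq_zero.mp (by rw [this, h] : E * (E + E⁻¹) = 0) with h' | h'
    · exact absurd h' hE0
    · exact h'
  have htanh : Complex.tanh (γ / 4) = (E ^ 2 - 1) / (E ^ 2 + 1) := by
    rw [Complex.tanh_eq_sinh_div_cosh, hsh4, hch4,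
      div_eq_div_iff (div_ne_zero hchE two_ne_zero) hE21]
    field_simp
  have hcos : Complex.cos (α / 2) = d * (E ^ 2 + 1) / 2 := by
    linear_combination had / 2 - htrS' / 2
  have hI : Complex.I ≠ 0 := Complex.I_ne_zero
  set sh := Complex.sinh (γ / 2) with hshdef
  have hsub2 : (!![Complex.exp (γ / 2), 0; 0, Complex.exp (-(γ / 2))]
      - !![Complex.exp (-(γ / 2)), 0; 0, Complex.exp (γ / 2)])
      = !![2 * sh, 0; 0, -(2 * sh)] := by
    ext i j
    fin_cases i <;> fin_cases j <;> simp [Matrix.sub_apply, he, hf, hsh2] <;> ring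
  rw [hlS, hlL, hA, hAinv, hLinv, hLdef, hsI, htanh, hcos, had]
  rw [Matrix.smul_mul, Matrix.mul_smul, smul_smul, hsub2]
  have hsub1 : (!![d * E ^ 2, b; c, d] - !![d, -b; -c, d * E ^ 2])
      = !![d * E ^ 2 - d, b + b; c + c, d - d * E ^ 2] := by
    ext i j; fin_cases i <;> fin_cases j <;> simp <;> ring
  rw [hsub1, Matrix.mul_fin_two, Matrix.trace_smul, Matrix.trace_fin_two_of,
    smul_eq_mul]
  field_simp
  ring_nf
  have hsin' : Complex.sin (α * (1 / 2)) ≠ 0 := by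
    rw [show α * (1 / 2) = α / 2 by ring]; exact hsin
  have c1 : sh * sh⁻¹ = 1 := mul_inv_cancel₀ hsinh
  have c2 : Complex.sin (α * (1 / 2)) * (Complex.sin (α * (1 / 2)))⁻¹ = 1 :=
    mul_inv_cancel₀ hsin'
  linear_combination 4 * sh * d * (1 - E ^ 2) * (1 - Complex.I ^ 2) * Complex.I_sq
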